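/- arXiv:2312.01189 — 2 statements merged into one kernel-verified Lean document; each statement's English description precedes it below -/
import Mathlib

section
/- Let f = a x^r + b x^s ∈ ℕ[x^{±1}] with a ≥ b ≥ 1 positive integers, r ≠ s, and a + b > 3. Then f can be written as the sum of two irreducible elements of ℕ[x^{±1}]. Specifically, if b = 1 then f = ((a−2)x^r + x^s) + 2x^r, and if b > 1 then f = ((a−1)x^r + x^s) + (x^r + (b−1)x^s), with all four summands irreducible. -/
/-- The semiring of Laurent polynomials with nonnegative integer coefficients, ℕ[x^{±1}]. -/
abbrev NL : Type := AddMonoidAlgebra ℕ ℤ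

/-- The monomial `c • x^k` in ℕ[x^{±1}]. -/
noncomputable def mono (k : ℤ) (c : ℕ) : NL := AddMonoidAlgebra.single k c

/-- Evaluation at 1, i.e. the sum of the coefficients. -/
def evalOne (f : NL) : ℕ := f.coeff.sum fun _ c => c

/-- A monomial is `c x^k` with `c ≥ 1`. -/
def IsMonomial (f : NL) : Prop := ∃ (c : ℕ) (k : ℤ), 0 < c ∧ f = mono k c

/-- A nonzero `f` is monolithic if any factorization has a monomial factor. -/
def Monolithic (f : NL) : Prop :=
  f ≠ 0 ∧ ∀ g h : NL, f = g * h → IsMonomial g ∨ IsMonomial h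

/-- `f` is hyper-monolithic: it has ≥ 2 terms, written with positive coefficients and
strictly decreasing exponents `k 0 > ⋯ > k n`, and either the first gap is strictly
smaller than every later gap, or the last gap is strictly smaller than every earlier gap. -/
def HyperMonolithic (f : NL) : Prop :=
  ∃ (n : ℕ) (k : ℕ → ℤ) (c : ℕ → ℕ),
    1 ≤ n ∧ (∀ i j, i < j → j ≤ n → k j < k i) ∧ (∀ i, i ≤ n → 0 < c i) ∧
    f = ∑ i ∈ Finset.range (n + 1), mono (k i) (c i) ∧
    ((∀ i, 1 ≤ i → i + 1 ≤ n → k 0 - k 1 < k i - k (i + 1)) ∨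
     (∀ j, j + 2 ≤ n → k (n - 1) - k n < k j - k (j + 1)))

open AddMonoidAlgebra Finsupp

lemma mono_def (k : ℤ) (c : ℕ) : mono k c = AddMonoidAlgebra.single k c := rfl

noncomputable def Ehom : NL →+* ℕ :=
  AddMonoidAlgebra.liftNCRingHom (RingHom.id ℕ) 1 (fun _ _ => Commute.all _ _)

lemma Ehom_mono (k : ℤ) (c : ℕ) : Ehom (mono k c) = c := by
  have h : Ehom (mono k c) = AddMonoidAlgebra.liftNC ((RingHom.id ℕ) : ℕ →+ ℕ)
      (⇑(1 : Multiplicative ℤ →* ℕ)) (AddMonoidAlgebra.single k c) := rfl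
  rw [h, AddMonoidAlgebra.liftNC_single]; simp

lemma Ehom_pos {f : NL} (hf : f ≠ 0) : 0 < Ehom f := by
  obtain ⟨a, ha⟩ := Finsupp.ne_iff.mp (mt AddMonoidAlgebra.coeff_eq_zero.mp hf)
  simp only [Finsupp.coe_zero, Pi.zero_apply] at ha
  have h1 : AddMonoidAlgebra.single a (f.coeff a) + f.erase a = f :=
    AddMonoidAlgebra.single_add_erase a f
  have h2 : Ehom f = f.coeff a + Ehom (f.erase a) := by
    conv_lhs => rw [← h1]
    rw [map_add, ← mono_def, Ehom_mono]
  omega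

lemma Ehom_eq_zero {f : NL} (hf : Ehom f = 0) : f = 0 := by
  by_contra h; have := Ehom_pos h; omega

lemma eq_mono_of_Ehom_eq_one {f : NL} (hf : Ehom f = 1) : ∃ k, f = mono k 1 := by
  have hf0 : f ≠ 0 := by intro h; rw [h, map_zero] at hf; omega
  obtain ⟨a, ha⟩ := Finsupp.ne_iff.mp (mt AddMonoidAlgebra.coeff_eq_zero.mp hf0)
  simp only [Finsupp.coe_zero, Pi.zero_apply] at ha
  have h1 : AddMonoidAlgebra.single a (f.coeff a) + f.erase a = f :=
    AddMonoidAlgebra.single_add_erase a f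
  have h2 : Ehom f = f.coeff a + Ehom (f.erase a) := by
    conv_lhs => rw [← h1]
    rw [map_add, ← mono_def, Ehom_mono]
  have hfa : f.coeff a = 1 := by omega
  have he : Ehom (f.erase a) = 0 := by omega
  have := Ehom_eq_zero he
  refine ⟨a, ?_⟩
  rw [← h1, this, add_zero, hfa, mono_def]

lemma isUnit_iff_mono {f : NL} : IsUnit f ↔ ∃ k, f = mono k 1 := by
  constructor
  · rintro ⟨u, rfl⟩
    have h1 : Ehom (u : NL) * Ehom (↑u⁻¹ : NL) = 1 := by
      rw [← map_mul]; simp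
    exact eq_mono_of_Ehom_eq_one (Nat.eq_one_of_mul_eq_one_right h1)
  · rintro ⟨k, rfl⟩
    refine IsUnit.of_mul_eq_one (mono (-k) 1) ?_
    rw [mono, mono, AddMonoidAlgebra.single_mul_single, add_neg_cancel, mul_one]
    exact AddMonoidAlgebra.one_def.symm

lemma mul_apply_le (g h : NL) (a b : ℤ) : g.coeff a * h.coeff b ≤ (g * h).coeff (a + b) := by
  classical
  rcases eq_or_ne (g.coeff a) 0 with hga | hga
  · simp [hga]
  rcases eq_or_ne (h.coeff b) 0 with hhb | hhb
  · simp [hhb]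
  rw [AddMonoidAlgebra.coeff_mul]
  have ha : a ∈ g.coeff.support := Finsupp.mem_support_iff.mpr hga
  have hb' : b ∈ h.coeff.support := Finsupp.mem_support_iff.mpr hhb
  calc g.coeff a * h.coeff b = (if a + b = a + b then g.coeff a * h.coeff b else 0) := by simp
    _ ≤ h.coeff.sum fun a₂ b₂ => if a + a₂ = a + b then g.coeff a * b₂ else 0 := by
        refine Finset.single_le_sum (f := fun a₂ => if a + a₂ = a + b then g.coeff a * h.coeff a₂ else 0)
          (fun i _ => by positivity) hb'
    _ ≤ g.coeff.sum fun a₁ b₁ => h.coeff.sum fun a₂ b₂ => if a₁ + a₂ = a + b then b₁ * b₂ else 0 := by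
        refine Finset.single_le_sum
          (f := fun a₁ => h.coeff.sum fun a₂ b₂ => if a₁ + a₂ = a + b then g.coeff a₁ * b₂ else 0)
          (fun i _ => ?_) ha
        exact Finset.sum_nonneg fun j _ => by positivity

lemma mem_support_mul {g h : NL} {a b : ℤ} (ha : a ∈ g.coeff.support) (hb : b ∈ h.coeff.support) :
    a + b ∈ (g * h).coeff.support := by
  rw [Finsupp.mem_support_iff] at *
  have := mul_apply_le g h a b
  exact fun hc => by rw [hc] at this; exact absurd (Nat.le_zero.mp this) (by positivity)

lemma three_le_card {g h : NL} (hg : 2 ≤ g.coeff.support.card) (hh : 2 ≤ h.coeff.support.card) :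
    3 ≤ (g * h).coeff.support.card := by
  have hgne : g.coeff.support.Nonempty := Finset.card_pos.mp (by omega)
  have hhne : h.coeff.support.Nonempty := Finset.card_pos.mp (by omega)
  set a1 := g.coeff.support.max' hgne
  set a2 := g.coeff.support.min' hgne
  set b1 := h.coeff.support.max' hhne
  set b2 := h.coeff.support.min' hhne
  have ha : a2 < a1 := Finset.min'_lt_max'_of_card _ (by omega)
  have hbb : b2 < b1 := Finset.min'_lt_max'_of_card _ (by omega)
  have h1 : a2 + b2 ∈ (g * h).coeff.support :=
    mem_support_mul (Finset.min'_mem _ _) (Finset.min'_mem _ _)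
  have h2 : a1 + b2 ∈ (g * h).coeff.support :=
    mem_support_mul (Finset.max'_mem _ _) (Finset.min'_mem _ _)
  have h3 : a1 + b1 ∈ (g * h).coeff.support :=
    mem_support_mul (Finset.max'_mem _ _) (Finset.max'_mem _ _)
  have hsub : ({a2 + b2, a1 + b2, a1 + b1} : Finset ℤ) ⊆ (g * h).coeff.support := by
    intro x hx; simp only [Finset.mem_insert, Finset.mem_singleton] at hx
    rcases hx with rfl | rfl | rfl <;> assumption
  have hcard : ({a2 + b2, a1 + b2, a1 + b1} : Finset ℤ).card = 3 := by
    rw [Finset.card_insert_of_notMem (by simp; omega),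
      Finset.card_insert_of_notMem (by simp; omega), Finset.card_singleton]
  calc 3 = _ := hcard.symm
    _ ≤ _ := Finset.card_le_card hsub

lemma binom_apply_left {r s : ℤ} {c1 c2 : ℕ} (hrs : r ≠ s) :
    (mono r c1 + mono s c2).coeff r = c1 := by
  rw [mono_def, mono_def, AddMonoidAlgebra.coeff_add, AddMonoidAlgebra.coeff_single,
    AddMonoidAlgebra.coeff_single, Finsupp.add_apply, Finsupp.single_eq_same,
    Finsupp.single_eq_of_ne hrs, add_zero]

lemma binom_apply_right {r s : ℤ} {c1 c2 : ℕ} (hrs : r ≠ s) :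
    (mono r c1 + mono s c2).coeff s = c2 := by
  rw [mono_def, mono_def, AddMonoidAlgebra.coeff_add, AddMonoidAlgebra.coeff_single,
    AddMonoidAlgebra.coeff_single, Finsupp.add_apply, Finsupp.single_eq_same,
    Finsupp.single_eq_of_ne (Ne.symm hrs), zero_add]

lemma binom_support {r s : ℤ} {c1 c2 : ℕ} (hrs : r ≠ s) (h1 : 0 < c1) (h2 : 0 < c2) :
    (mono r c1 + mono s c2).coeff.support = {r, s} := by
  rw [mono_def, mono_def, AddMonoidAlgebra.coeff_add, AddMonoidAlgebra.coeff_single,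
    AddMonoidAlgebra.coeff_single, Finsupp.support_add_eq, Finsupp.support_single_ne_zero _ (by omega),
    Finsupp.support_single_ne_zero _ (by omega)]
  · rfl
  · rw [Finsupp.support_single_ne_zero _ (by omega), Finsupp.support_single_ne_zero _ (by omega)]
    simpa using hrs

lemma mono_card_le {g : NL} (hg : g.coeff.support.card ≤ 1) (hg0 : g ≠ 0) :
    ∃ k d, 0 < d ∧ g = mono k d := by
  have : g.coeff.support.Nonempty := Finsupp.support_nonempty_iff.mpr (mt AddMonoidAlgebra.coeff_eq_zero.mp hg0)
  obtain ⟨k, hk⟩ := Finset.card_eq_one.mp (le_antisymm hg (Finset.card_pos.mpr this))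
  refine ⟨k, g.coeff k, ?_, ?_⟩
  · have : k ∈ g.coeff.support := hk ▸ Finset.mem_singleton_self k
    exact Nat.pos_of_ne_zero (Finsupp.mem_support_iff.mp this)
  · rw [mono_def, ← AddMonoidAlgebra.coeff_inj, AddMonoidAlgebra.coeff_single]
    ext x
    rcases eq_or_ne x k with rfl | hx
    · exact Finsupp.single_eq_same.symm
    · rw [Finsupp.single_eq_of_ne hx]
      by_contra h
      have : x ∈ g.coeff.support := Finsupp.mem_support_iff.mpr h
      rw [hk, Finset.mem_singleton] at this; exact hx this

lemma binom_irreducible {r s : ℤ} {c1 c2 : ℕ} (hrs : r ≠ s) (h1 : 0 < c1) (h2 : 0 < c2)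
    (hone : c1 = 1 ∨ c2 = 1) : Irreducible (mono r c1 + mono s c2) := by
  set f := mono r c1 + mono s c2 with hf
  have hEf : Ehom f = c1 + c2 := by rw [hf, map_add, Ehom_mono, Ehom_mono]
  constructor
  · intro hu
    obtain ⟨k, hk⟩ := isUnit_iff_mono.mp hu
    have := Ehom_mono k 1
    rw [← hk, hEf] at this; omega
  · intro g h hgh
    have hf0 : f ≠ 0 := fun hc => by rw [hc, map_zero] at hEf; omega
    have hg0 : g ≠ 0 := fun hc => hf0 (by rw [hgh, hc, zero_mul])
    have hh0 : h ≠ 0 := fun hc => hf0 (by rw [hgh, hc, mul_zero])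
    have hfs : f.coeff.support.card = 2 := by
      rw [hf, binom_support hrs h1 h2, Finset.card_insert_of_notMem (by simpa using hrs),
        Finset.card_singleton]
    have hcards : g.coeff.support.card ≤ 1 ∨ h.coeff.support.card ≤ 1 := by
      by_contra hc
      push_neg at hc
      have := three_le_card (g := g) (h := h) (by omega) (by omega)
      rw [← hgh, hfs] at this; omega
    -- key monomial-divisor argument
    have key : ∀ g' h' : NL, f = g' * h' → g'.coeff.support.card ≤ 1 → g' ≠ 0 → IsUnit g' := by
      intro g' h' hgh' hcard hne
      obtain ⟨k, d, hd, rfl⟩ := mono_card_le hcard hne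
      have hr' : c1 = d * h'.coeff (-k + r) := by
        have := AddMonoidAlgebra.coeff_single_mul_apply h' d k r
        rw [← mono, ← hgh', hf, binom_apply_left hrs] at this
        exact this
      have hs' : c2 = d * h'.coeff (-k + s) := by
        have := AddMonoidAlgebra.coeff_single_mul_apply h' d k s
        rw [← mono, ← hgh', hf, binom_apply_right hrs] at this
        exact this
      have hd1 : d = 1 := by
        rcases hone with h' | h'
        · rw [h'] at hr'; exact Nat.eq_one_of_mul_eq_one_right hr'.symm
        · rw [h'] at hs'; exact Nat.eq_one_of_mul_eq_one_right hs'.symm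
      rw [hd1]; exact isUnit_iff_mono.mpr ⟨k, rfl⟩
    rcases hcards with hc | hc
    · exact Or.inl (key g h hgh hc hg0)
    · exact Or.inr (key h g (by rw [hgh, mul_comm]) hc hh0)

lemma mono_two_irreducible (r : ℤ) : Irreducible (mono r 2) := by
  constructor
  · intro hu
    obtain ⟨k, hk⟩ := isUnit_iff_mono.mp hu
    have h1 := Ehom_mono k 1
    rw [← hk, Ehom_mono] at h1; omega
  · intro g h hgh
    have hE : Ehom g * Ehom h = 2 := by rw [← map_mul, ← hgh, Ehom_mono]
    have hg0 : g ≠ 0 := fun hc => by rw [hc, map_zero, zero_mul] at hE; omega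
    have hh0 : h ≠ 0 := fun hc => by rw [hc, map_zero, mul_zero] at hE; omega
    have hg1 := Ehom_pos hg0
    have hh1 := Ehom_pos hh0
    rcases Nat.lt_or_ge (Ehom g) 2 with h' | h'
    · exact Or.inl (isUnit_iff_mono.mpr (eq_mono_of_Ehom_eq_one (by omega)))
    · have : Ehom h = 1 := by nlinarith
      exact Or.inr (isUnit_iff_mono.mpr (eq_mono_of_Ehom_eq_one this))

lemma mono_add_same (k : ℤ) (c d : ℕ) : mono k c + mono k d = mono k (c + d) := by
  rw [mono_def, mono_def, mono_def, AddMonoidAlgebra.single_add]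

/-- Binomial case: `a x^r + b x^s` with `a ≥ b ≥ 1`, `r ≠ s`, `a + b > 3` is a sum of
two irreducibles, with the explicit decompositions given in each case. -/
theorem stmt11 (a b : ℕ) (r s : ℤ) (hb : 1 ≤ b) (hba : b ≤ a) (hrs : r ≠ s)
    (hab : 3 < a + b) :
    (∃ g h : NL, Irreducible g ∧ Irreducible h ∧ mono r a + mono s b = g + h) ∧
    (b = 1 →
      Irreducible (mono r (a - 2) + mono s 1) ∧ Irreducible (mono r 2) ∧
      mono r a + mono s b = (mono r (a - 2) + mono s 1) + mono r 2) ∧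
    (1 < b →
      Irreducible (mono r (a - 1) + mono s 1) ∧ Irreducible (mono r 1 + mono s (b - 1)) ∧
      mono r a + mono s b = (mono r (a - 1) + mono s 1) + (mono r 1 + mono s (b - 1))) := by
  have case1 : b = 1 →
      Irreducible (mono r (a - 2) + mono s 1) ∧ Irreducible (mono r 2) ∧
      mono r a + mono s b = (mono r (a - 2) + mono s 1) + mono r 2 := by
    rintro rfl
    refine ⟨binom_irreducible hrs (by omega) one_pos (Or.inr rfl), mono_two_irreducible r, ?_⟩
    rw [add_right_comm, mono_add_same]
    congr 2
    omega
  have case2 : 1 < b →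
      Irreducible (mono r (a - 1) + mono s 1) ∧ Irreducible (mono r 1 + mono s (b - 1)) ∧
      mono r a + mono s b = (mono r (a - 1) + mono s 1) + (mono r 1 + mono s (b - 1)) := by
    intro hb1
    refine ⟨binom_irreducible hrs (by omega) one_pos (Or.inr rfl),
      binom_irreducible hrs one_pos (by omega) (Or.inl rfl), ?_⟩
    rw [add_add_add_comm, mono_add_same, mono_add_same]
    congr 2 <;> omega
  refine ⟨?_, case1, case2⟩
  rcases eq_or_lt_of_le hb with h1 | h1
  · obtain ⟨i1, i2, heq⟩ := case1 h1.symm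
    exact ⟨_, _, i1, i2, heq⟩
  · obtain ⟨i1, i2, heq⟩ := case2 h1
    exact ⟨_, _, i1, i2, heq⟩
end

section
/- Let g = x^{k_1} + x^{k_2} + x^{k_3} + x^{k_4} ∈ ℕ[x^{±1}] with k_1 > k_2 > k_3 > k_4 and k_1 − k_2 ≠ k_3 − k_4. Then g is irreducible in ℕ[x^{±1}]. -/
lemma mono_apply (k : ℤ) (c : ℕ) (x : ℤ) : (mono k c).coeff x = if k = x then c else 0 :=
  Finsupp.single_apply

lemma NL_add_apply (f g : NL) (x : ℤ) : (f + g).coeff x = f.coeff x + g.coeff x := rfl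

lemma evalOne_zero : evalOne (0 : NL) = 0 := by
  simp [evalOne]

lemma evalOne_single (k : ℤ) (c : ℕ) : evalOne (mono k c) = c := by
  simp only [evalOne, mono, AddMonoidAlgebra.coeff_single]
  exact Finsupp.sum_single_index rfl

lemma evalOne_add (f g : NL) : evalOne (f + g) = evalOne f + evalOne g := by
  classical
  unfold evalOne; rw [AddMonoidAlgebra.coeff_add]
  exact Finsupp.sum_add_index (by simp) (by simp)

noncomputable def eOne : NL →+* ℕ :=
  AddMonoidAlgebra.liftNCRingHom (RingHom.id ℕ) 1 (fun _ _ => Commute.all _ _)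

lemma eOne_single (k : ℤ) (c : ℕ) : eOne (mono k c) = c := by
  show AddMonoidAlgebra.liftNC _ _ (AddMonoidAlgebra.single k c) = c
  rw [AddMonoidAlgebra.liftNC_single]
  exact mul_one c

noncomputable def evalOneHom : NL →+ ℕ where
  toFun := evalOne
  map_zero' := evalOne_zero
  map_add' := evalOne_add

lemma eOne_eq (f : NL) : eOne f = evalOne f := by
  have h : eOne.toAddMonoidHom = evalOneHom := by
    apply AddMonoidAlgebra.addMonoidHom_ext
    intro k c
    show eOne (mono k c) = evalOne (mono k c)
    rw [eOne_single, evalOne_single]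
  exact DFunLike.congr_fun h f

lemma evalOne_mul (f g : NL) : evalOne (f * g) = evalOne f * evalOne g := by
  rw [← eOne_eq, ← eOne_eq, ← eOne_eq, map_mul]

lemma card_le_evalOne (g : NL) : g.coeff.support.card ≤ evalOne g := by
  have := Finset.card_nsmul_le_sum g.coeff.support g.coeff 1
    (fun x hx => Nat.one_le_iff_ne_zero.mpr (Finsupp.mem_support_iff.mp hx))
  simpa [evalOne, Finsupp.sum] using this

lemma eval_eq_one {g : NL} (h : evalOne g = 1) : ∃ k, g = mono k 1 := by
  have hc := card_le_evalOne g
  have hne : g ≠ 0 := by rintro rfl; rw [evalOne_zero] at h; omega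
  have h1 : g.coeff.support.card = 1 := by
    have : 0 < g.coeff.support.card := Finset.card_pos.mpr (Finsupp.support_nonempty_iff.mpr
      (by rwa [Ne, ← AddMonoidAlgebra.coeff_inj, AddMonoidAlgebra.coeff_zero] at hne))
    omega
  obtain ⟨a, _, hg⟩ := Finsupp.card_support_eq_one.mp h1
  have hga : g.coeff a = 1 := by
    unfold evalOne at h; rw [hg] at h
    rwa [Finsupp.sum_single_index rfl] at h
  exact ⟨a, by rw [← AddMonoidAlgebra.coeff_inj, hg, hga]; rfl⟩

lemma eval_eq_two {g : NL} (h : evalOne g = 2) :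
    (∃ k, g = mono k 2) ∨ ∃ a b, b < a ∧ g = mono a 1 + mono b 1 := by
  classical
  have hc := card_le_evalOne g
  have hne : g ≠ 0 := by rintro rfl; rw [evalOne_zero] at h; omega
  have hpos : 0 < g.coeff.support.card := Finset.card_pos.mpr (Finsupp.support_nonempty_iff.mpr
    (by rwa [Ne, ← AddMonoidAlgebra.coeff_inj, AddMonoidAlgebra.coeff_zero] at hne))
  have hcase : g.coeff.support.card = 1 ∨ g.coeff.support.card = 2 := by omega
  rcases hcase with h1 | h2
  · obtain ⟨a, _, hg⟩ := Finsupp.card_support_eq_one.mp h1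
    have hga : g.coeff a = 2 := by
      unfold evalOne at h; rw [hg] at h
      rwa [Finsupp.sum_single_index rfl] at h
    exact Or.inl ⟨a, by rw [← AddMonoidAlgebra.coeff_inj, hg, hga]; rfl⟩
  · obtain ⟨a, b, hab, hsup⟩ := Finset.card_eq_two.mp h2
    have ha : g.coeff a ≠ 0 := Finsupp.mem_support_iff.mp (by rw [hsup]; simp)
    have hb : g.coeff b ≠ 0 := Finsupp.mem_support_iff.mp (by rw [hsup]; simp)
    have hg : g = mono a (g.coeff a) + mono b (g.coeff b) := by
      ext x
      rw [NL_add_apply, mono_apply, mono_apply]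
      by_cases hxa : a = x
      · subst hxa; simp [Ne.symm hab]
      · by_cases hxb : b = x
        · subst hxb; simp [hxa]
        · have : x ∉ g.coeff.support := by rw [hsup]; simp [Ne.symm hxa, Ne.symm hxb]
          simp [Finsupp.notMem_support_iff.mp this, hxa, hxb]
    have hsum : g.coeff a + g.coeff b = 2 := by
      rw [hg, evalOne_add, evalOne_single, evalOne_single] at h
      exact h
    have hga : g.coeff a = 1 := by omega
    have hgb : g.coeff b = 1 := by omega
    rw [hga, hgb] at hg
    rcases hab.lt_or_gt with hlt | hlt
    · exact Or.inr ⟨b, a, hlt, by rw [hg]; ring⟩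
    · exact Or.inr ⟨a, b, hlt, hg⟩

lemma isUnit_mono1 (k : ℤ) : IsUnit (mono k 1) := by
  refine IsUnit.of_mul_eq_one (mono (-k) 1) ?_
  rw [mono, mono, AddMonoidAlgebra.single_mul_single, mul_one,
    show k + -k = 0 by ring]
  exact AddMonoidAlgebra.one_def.symm

lemma evalOne_of_isUnit {u : NL} (h : IsUnit u) : evalOne u = 1 := by
  obtain ⟨v, hv⟩ := h.exists_right_inv
  have hm := evalOne_mul u v
  rw [hv] at hm
  have h1 : evalOne (1 : NL) = 1 := by
    rw [AddMonoidAlgebra.one_def]; exact evalOne_single 0 1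
  rw [h1] at hm
  exact Nat.eq_one_of_mul_eq_one_right hm.symm

set_option maxHeartbeats 2000000 in
/-- A four-term polynomial with all coefficients 1 and `k₁ − k₂ ≠ k₃ − k₄` is irreducible. -/
theorem stmt13 (k₁ k₂ k₃ k₄ : ℤ) (h12 : k₂ < k₁) (h23 : k₃ < k₂) (h34 : k₄ < k₃)
    (hne : k₁ - k₂ ≠ k₃ - k₄) :
    Irreducible (mono k₁ 1 + mono k₂ 1 + mono k₃ 1 + mono k₄ 1) := by
  classical
  set F : NL := mono k₁ 1 + mono k₂ 1 + mono k₃ 1 + mono k₄ 1 with hF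
  have hF4 : evalOne F = 4 := by
    rw [hF, evalOne_add, evalOne_add, evalOne_add, evalOne_single, evalOne_single,
      evalOne_single, evalOne_single]
  have hFk1 : F.coeff k₁ = 1 := by
    rw [hF]
    simp only [NL_add_apply, mono_apply]
    split_ifs <;> omega
  constructor
  · intro hu
    have := evalOne_of_isUnit hu
    omega
  · intro g h hgh
    have h4 : evalOne g * evalOne h = 4 := by rw [← evalOne_mul, ← hgh, hF4]
    have hg0 : evalOne g ≠ 0 := by intro h0; rw [h0] at h4; omega
    have hg4 : evalOne g ≤ 4 := Nat.le_of_dvd (by norm_num) ⟨_, h4.symm⟩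
    have h3 : evalOne g ≠ 3 := by intro h3; rw [h3] at h4; omega
    have hcases : evalOne g = 1 ∨ evalOne g = 2 ∨ evalOne g = 4 := by omega
    rcases hcases with h1 | h2 | hfour
    · left; obtain ⟨k, rfl⟩ := eval_eq_one h1; exact isUnit_mono1 k
    · exfalso
      have hh2 : evalOne h = 2 := by rw [h2] at h4; omega
      rcases eval_eq_two h2 with ⟨k, rfl⟩ | ⟨a, b, hba, rfl⟩
      · -- g = 2 x^k : all coefficients of F would be even
        have := congrArg (fun f : NL => f.coeff k₁) hgh
        simp only [mono] at this
        rw [hFk1, AddMonoidAlgebra.coeff_single_mul_apply] at this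
        omega
      rcases eval_eq_two hh2 with ⟨k, rfl⟩ | ⟨c, d, hdc, rfl⟩
      · have := congrArg (fun f : NL => f.coeff k₁) hgh
        simp only [mono] at this
        rw [hFk1, AddMonoidAlgebra.coeff_mul_single_apply] at this
        omega
      · -- the genuine binomial × binomial case
        have hGH : (mono a 1 + mono b 1) * (mono c 1 + mono d 1)
            = mono (a+c) 1 + mono (a+d) 1 + mono (b+c) 1 + mono (b+d) 1 := by
          unfold mono
          rw [add_mul, mul_add, mul_add, AddMonoidAlgebra.single_mul_single,
            AddMonoidAlgebra.single_mul_single, AddMonoidAlgebra.single_mul_single,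
            AddMonoidAlgebra.single_mul_single]
          simp only [mul_one]
          ring
        rw [hGH] at hgh
        have key : ∀ x : ℤ, F.coeff x = (mono (a+c) 1 + mono (a+d) 1 + mono (b+c) 1 + mono (b+d) 1 : NL).coeff x :=
          fun x => by rw [hgh]
        have e1 : a + c = k₁ ∨ a + c = k₂ ∨ a + c = k₃ ∨ a + c = k₄ := by
          have := key (a+c)
          rw [hF] at this
          simp only [NL_add_apply, mono_apply] at this
          split_ifs at this <;> omega
        have e2 : k₁ = a + c ∨ k₁ = a + d ∨ k₁ = b + c ∨ k₁ = b + d := by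
          have := key k₁
          rw [hF] at this
          simp only [NL_add_apply, mono_apply] at this
          split_ifs at this <;> omega
        have e3 : b + d = k₁ ∨ b + d = k₂ ∨ b + d = k₃ ∨ b + d = k₄ := by
          have := key (b+d)
          rw [hF] at this
          simp only [NL_add_apply, mono_apply] at this
          split_ifs at this <;> omega
        have e4 : k₄ = a + c ∨ k₄ = a + d ∨ k₄ = b + c ∨ k₄ = b + d := by
          have := key k₄
          rw [hF] at this
          simp only [NL_add_apply, mono_apply] at this
          split_ifs at this <;> omega
        have e5 : a + d = k₁ ∨ a + d = k₂ ∨ a + d = k₃ ∨ a + d = k₄ := by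
          have := key (a+d)
          rw [hF] at this
          simp only [NL_add_apply, mono_apply] at this
          split_ifs at this <;> omega
        have e6 : b + c = k₁ ∨ b + c = k₂ ∨ b + c = k₃ ∨ b + c = k₄ := by
          have := key (b+c)
          rw [hF] at this
          simp only [NL_add_apply, mono_apply] at this
          split_ifs at this <;> omega
        have e7 : a + d ≠ b + c := by
          intro heq
          have := key (a+d)
          rw [hF] at this
          simp only [NL_add_apply, mono_apply] at this
          split_ifs at this <;> omega
        omega
    · right
      have hh1 : evalOne h = 1 := by rw [hfour] at h4; omega
      obtain ⟨k, rfl⟩ := eval_eq_one hh1; exact isUnit_mono1 k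
end
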